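/- Let h be analytic on the open unit disk D with h(0) = 1, h'(0) = 2b(1-α) for some real b with |b| ≤ 1, and Re h(z) > α on D, where 0 ≤ α < 1. Then for |z| = r < 1 with h(z) ≠ 0: |z h'(z)/h(z)| ≤ (2(1-α)r/(1-r²)) · (|b|r² + 2r + |b|)/((1-2α)r² + 2(1-α)|b|r + 1). -/

import Mathlib

open Complex Metric Set Function
set_option maxHeartbeats 1000000

noncomputable def mob (a z : ℂ) : ℂ := (a - z) / (1 - (starRingEnd ℂ) a * z)

lemma mob_denom_ne {a z : ℂ} (ha : ‖a‖ ≤ 1) (hz : ‖z‖ < 1) :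
    1 - (starRingEnd ℂ) a * z ≠ 0 := by
  intro h
  have h1 : (1 : ℂ) = (starRingEnd ℂ) a * z := by linear_combination h
  have : ‖(starRingEnd ℂ) a * z‖ < 1 := by
    rw [norm_mul, Complex.norm_conj]
    calc ‖a‖ * ‖z‖ ≤ 1 * ‖z‖ := by
          exact mul_le_mul_of_nonneg_right ha (norm_nonneg z)
      _ < 1 := by simpa
  rw [← h1] at this
  simp at this

lemma normSq_key (a z : ℂ) :
    Complex.normSq (1 - (starRingEnd ℂ) a * z) - Complex.normSq (a - z)
      = (1 - Complex.normSq a) * (1 - Complex.normSq z) := by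
  simp [Complex.normSq_apply, Complex.mul_re, Complex.mul_im, Complex.sub_re, Complex.sub_im]
  ring

lemma mob_mem {a z : ℂ} (ha : ‖a‖ < 1) (hz : ‖z‖ < 1) :
    ‖mob a z‖ < 1 := by
  have hd := mob_denom_ne ha.le hz
  have hdpos : 0 < ‖1 - (starRingEnd ℂ) a * z‖ :=
    norm_pos_iff.mpr hd
  rw [mob, norm_div, div_lt_one hdpos]
  · have hkey := normSq_key a z
    have h1 : Complex.normSq a < 1 := by
      rw [← Complex.sq_norm]; nlinarith [norm_nonneg a]
    have h2 : Complex.normSq z < 1 := by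
      rw [← Complex.sq_norm]; nlinarith [norm_nonneg z]
    have : Complex.normSq (a - z) < Complex.normSq (1 - (starRingEnd ℂ) a * z) := by nlinarith
    have := Real.sqrt_lt_sqrt (Complex.normSq_nonneg _) this
    simpa [Complex.norm_def] using this

lemma mob_hasDerivAt {a z : ℂ} (hd : 1 - (starRingEnd ℂ) a * z ≠ 0) :
    HasDerivAt (mob a) (((starRingEnd ℂ) a * a - 1) / (1 - (starRingEnd ℂ) a * z) ^ 2) z := by
  have h1 : HasDerivAt (fun w => a - w) (-1) z := by
    simpa using (hasDerivAt_id z).const_sub a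
  have h2 : HasDerivAt (fun w => 1 - (starRingEnd ℂ) a * w) (-((starRingEnd ℂ) a)) z := by
    simpa using ((hasDerivAt_id z).const_mul ((starRingEnd ℂ) a)).const_sub 1
  have := h1.div h2 hd
  refine this.congr_deriv ?_
  ring

-- constant case helper
lemma const_case {g : ℂ → ℂ} (hd : DifferentiableOn ℂ g (ball 0 1))
    (hm : ∀ w ∈ ball (0:ℂ) 1, ‖g w‖ ≤ 1)
    (hns : ¬ ∀ w ∈ ball (0:ℂ) 1, ‖g w‖ < 1) :
    ∀ w ∈ ball (0:ℂ) 1, g w = g 0 ∧ ‖g w‖ = 1 := by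
  push_neg at hns
  obtain ⟨w₀, hw₀, hge⟩ := hns
  have h1 : ‖g w₀‖ = 1 := le_antisymm (hm w₀ hw₀) hge
  have hmax : IsMaxOn (norm ∘ g) (ball 0 1) w₀ := by
    intro w hw
    simp only [comp_apply]
    rw [h1]; exact hm w hw
  have heq := Complex.eqOn_of_isPreconnected_of_isMaxOn_norm
    (convex_ball (0:ℂ) 1).isPreconnected isOpen_ball hd hw₀ hmax
  intro w hw
  have h0mem : (0:ℂ) ∈ ball (0:ℂ) 1 := by simp
  have e1 : g w = g w₀ := heq hw
  have e2 : g 0 = g w₀ := heq h0mem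
  refine ⟨by rw [e1, e2], by rw [e1, h1]⟩

lemma pick_val {g : ℂ → ℂ} (hd : DifferentiableOn ℂ g (ball 0 1))
    (hm : ∀ w ∈ ball (0:ℂ) 1, ‖g w‖ ≤ 1) {z : ℂ} (hz : z ∈ ball (0:ℂ) 1) :
    ‖g z‖ * (1 + ‖g 0‖ * ‖z‖)
      ≤ ‖z‖ + ‖g 0‖ := by
  have h0mem : (0:ℂ) ∈ ball (0:ℂ) 1 := by simp
  set x := ‖g z‖ with hxdef
  set β := ‖g 0‖ with hβdef
  set ρ := ‖z‖ with hρdef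
  have hx1 : x ≤ 1 := hm z hz
  have hβ1 : β ≤ 1 := hm 0 h0mem
  have hρ1 : ρ < 1 := by simpa [hρdef] using mem_ball_zero_iff.1 hz
  have hx0 : 0 ≤ x := norm_nonneg _
  have hβ0 : 0 ≤ β := norm_nonneg _
  have hρ0 : 0 ≤ ρ := norm_nonneg _
  by_cases hstrict : ∀ w ∈ ball (0:ℂ) 1, ‖g w‖ < 1
  · -- strict case
    -- G := mob (g 0) ∘ g
    set G : ℂ → ℂ := fun w => mob (g 0) (g w) with hGdef
    have hGd : DifferentiableOn ℂ G (ball 0 1) := by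
      apply DifferentiableOn.div
      · exact (differentiableOn_const _).sub hd
      · exact (differentiableOn_const _).sub ((differentiableOn_const _).mul hd)
      · intro w hw; exact mob_denom_ne (hm 0 h0mem) (hstrict w hw)
    have hG0 : G 0 = 0 := by simp [hGdef, mob]
    have hGm : MapsTo G (ball 0 1) (ball (G 0) 1) := by
      intro w hw
      rw [hG0, mem_ball_zero_iff]
      exact mob_mem (hstrict 0 h0mem) (hstrict w hw)
    have hds := Complex.norm_dslope_le_div_of_mapsTo_ball hGd (hGm.mono_right ball_subset_closedBall) hz
    have habs : ‖G z‖ ≤ ρ := by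
      rcases eq_or_ne z 0 with rfl | hz0
      · simp only [hG0, norm_zero]; exact hρ0
      · rw [dslope_of_ne _ hz0, slope_def_field, hG0] at hds
        have : ‖G z / z‖ ≤ 1 := by simpa using hds
        rw [norm_div, div_le_one (norm_pos_iff.mpr hz0)] at this
        simpa [hρdef] using this
    -- habs : |g0 - g z| / |1 - conj (g 0) * g z| ≤ ρ
    have hdne : 1 - (starRingEnd ℂ) (g 0) * g z ≠ 0 :=
      mob_denom_ne (hm 0 h0mem) (hstrict z hz)
    have habs2 : ‖g 0 - g z‖ ≤ ρ * ‖1 - (starRingEnd ℂ) (g 0) * g z‖ := by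
      rw [hGdef] at habs
      unfold mob at habs
      rw [norm_div, div_le_iff₀ (norm_pos_iff.mpr hdne)] at habs
      linarith [habs]
    -- square it
    have hsq : Complex.normSq (g 0 - g z)
        ≤ ρ^2 * Complex.normSq (1 - (starRingEnd ℂ) (g 0) * g z) := by
      have := mul_le_mul habs2 habs2 (norm_nonneg _) (by positivity)
      rw [← Complex.sq_norm, ← Complex.sq_norm]
      nlinarith [this]
    set R := ((starRingEnd ℂ) (g 0) * g z).re with hRdef
    have hRbound : |R| ≤ β * x := by
      calc |R| ≤ ‖(starRingEnd ℂ) (g 0) * g z‖ := Complex.abs_re_le_norm _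
        _ = β * x := by rw [norm_mul, Complex.norm_conj]
    have hexp1 : Complex.normSq (g 0 - g z) = β^2 - 2*R + x^2 := by
      simp only [Complex.normSq_sub, ← Complex.sq_norm, hRdef]
      rw [Complex.mul_re]
      simp [Complex.normSq_apply, Complex.conj_re, Complex.conj_im, Complex.mul_re, hβdef, hxdef,
        Complex.sq_norm, Complex.normSq_apply]
      ring
    have hexp2 : Complex.normSq (1 - (starRingEnd ℂ) (g 0) * g z) = 1 - 2*R + β^2*x^2 := by
      rw [Complex.normSq_sub]
      simp [hRdef, ← Complex.sq_norm, norm_mul, Complex.norm_conj, hβdef, hxdef]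
      ring
    rw [hexp1, hexp2] at hsq
    have hR1 : R ≤ β * x := (abs_le.1 hRbound).2
    have hR2 : -(β*x) ≤ R := (abs_le.1 hRbound).1
    clear_value x β ρ R
    have h1ρ : 0 < 1 - ρ^2 := by nlinarith
    have e5 : 2*R*(1-ρ^2) ≤ 2*β*x*(1-ρ^2) := by nlinarith
    have hQ : ((1+β*ρ)*x - (β+ρ)) * ((1-β*ρ)*x - (β-ρ)) ≤ 0 := by nlinarith [hsq, e5]
    by_contra hcon
    push_neg at hcon
    have hP : 0 < (1+β*ρ)*x - (β+ρ) := by nlinarith [hcon]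
    have hS : (1-β*ρ)*x - (β-ρ) ≤ 0 := by
      by_contra hS'
      push_neg at hS'
      nlinarith [mul_pos hP hS']
    have hbx : β*x ≤ 1 := mul_le_one₀ hβ1 hx0 hx1
    have hβρx : β*ρ*x ≤ ρ := by nlinarith
    nlinarith [hP, hS, hβρx]
  · -- constant case
    obtain ⟨-, h1⟩ := const_case hd hm hstrict z hz
    obtain ⟨-, h2⟩ := const_case hd hm hstrict 0 h0mem
    rw [hxdef, hβdef, h1, h2]
    nlinarith [hρ0, hρ1]

lemma pick_deriv {g : ℂ → ℂ} (hd : DifferentiableOn ℂ g (ball 0 1))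
    (hm : ∀ w ∈ ball (0:ℂ) 1, ‖g w‖ ≤ 1) {z : ℂ} (hz : z ∈ ball (0:ℂ) 1) :
    ‖deriv g z‖ * (1 - (‖z‖)^2) ≤ 1 - (‖g z‖)^2 := by
  have h0mem : (0:ℂ) ∈ ball (0:ℂ) 1 := by simp
  have hρ1 : ‖z‖ < 1 := by simpa using mem_ball_zero_iff.1 hz
  by_cases hstrict : ∀ w ∈ ball (0:ℂ) 1, ‖g w‖ < 1
  · set t := ‖g z‖ with htdef
    set ρ := ‖z‖ with hρdef
    have ht1 : t < 1 := hstrict z hz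
    have ht0 : 0 ≤ t := norm_nonneg _
    have hρ0 : 0 ≤ ρ := norm_nonneg _
    have ht2 : (0:ℝ) < 1 - t^2 := by nlinarith
    have hρ2 : (0:ℝ) < 1 - ρ^2 := by nlinarith
    set inner : ℂ → ℂ := fun w => g (mob z w) with hinnerdef
    have hmobd : DifferentiableOn ℂ (mob z) (ball 0 1) := by
      apply DifferentiableOn.div
      · exact (differentiableOn_const _).sub differentiableOn_id
      · exact (differentiableOn_const _).sub ((differentiableOn_const _).mul differentiableOn_id)
      · intro w hw
        exact mob_denom_ne hρ1.le (by simpa using mem_ball_zero_iff.1 hw)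
    have hmobmem : MapsTo (mob z) (ball 0 1) (ball 0 1) := by
      intro w hw
      rw [mem_ball_zero_iff]
      exact mob_mem hρ1 (by simpa using mem_ball_zero_iff.1 hw)
    have hinnerd : DifferentiableOn ℂ inner (ball 0 1) := hd.comp hmobd hmobmem
    have hinnermem : ∀ w ∈ ball (0:ℂ) 1, ‖inner w‖ < 1 := fun w hw =>
      hstrict _ (hmobmem hw)
    set F : ℂ → ℂ := fun w => mob (g z) (inner w) with hFdef
    have hFd : DifferentiableOn ℂ F (ball 0 1) := by
      apply DifferentiableOn.div
      · exact (differentiableOn_const _).sub hinnerd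
      · exact (differentiableOn_const _).sub ((differentiableOn_const _).mul hinnerd)
      · intro w hw
        exact mob_denom_ne (hm z hz) (hinnermem w hw)
    have hmob0 : mob z 0 = z := by simp [mob]
    have hinner0 : inner 0 = g z := by rw [hinnerdef]; simp only [hmob0]
    have hF0 : F 0 = 0 := by
      rw [hFdef]; simp only [hinner0, mob, sub_self, zero_div]
    have hFm : MapsTo F (ball 0 1) (ball (F 0) 1) := by
      intro w hw
      rw [hF0, mem_ball_zero_iff]
      exact mob_mem (hstrict z hz) (hinnermem w hw)
    have hds := Complex.norm_dslope_le_div_of_mapsTo_ball hFd (hFm.mono_right ball_subset_closedBall) h0mem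
    rw [dslope_same] at hds
    -- compute deriv F 0
    have hgz : HasDerivAt g (deriv g z) z :=
      (hd.differentiableAt (isOpen_ball.mem_nhds hz)).hasDerivAt
    have hm1 : HasDerivAt (mob z) ((starRingEnd ℂ) z * z - 1) 0 := by
      have := mob_hasDerivAt (a := z) (z := 0) (by simp)
      simpa using this
    have hgz' : HasDerivAt g (deriv g z) (mob z 0) := by rw [hmob0]; exact hgz
    have comp1 : HasDerivAt inner (deriv g z * ((starRingEnd ℂ) z * z - 1)) 0 :=
      HasDerivAt.comp 0 hgz' hm1
    have hne2 : 1 - (starRingEnd ℂ) (g z) * g z ≠ 0 := mob_denom_ne (hm z hz) (hstrict z hz)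
    have hm2 : HasDerivAt (mob (g z))
        (((starRingEnd ℂ) (g z) * g z - 1) / (1 - (starRingEnd ℂ) (g z) * g z) ^ 2) (inner 0) := by
      rw [hinner0]; exact mob_hasDerivAt hne2
    have compF : HasDerivAt F
        ((((starRingEnd ℂ) (g z) * g z - 1) / (1 - (starRingEnd ℂ) (g z) * g z) ^ 2) *
          (deriv g z * ((starRingEnd ℂ) z * z - 1))) 0 :=
      HasDerivAt.comp 0 hm2 comp1
    have hderivF := compF.deriv
    rw [hderivF] at hds
    -- simplify casts
    have hcz : (starRingEnd ℂ) z * z = ((ρ^2 : ℝ) : ℂ) := by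
      rw [mul_comm, Complex.mul_conj, hρdef, Complex.sq_norm]
    have hcgz : (starRingEnd ℂ) (g z) * g z = ((t^2 : ℝ) : ℂ) := by
      rw [mul_comm, Complex.mul_conj, htdef, Complex.sq_norm]
    rw [hcz, hcgz] at hds
    have hr : (-(1/(1 - t^2)) : ℝ) = (t^2 - 1)/(1 - t^2)^2 := by
      field_simp [ht2.ne']
      ring
    have e1 : (((t^2 : ℝ) : ℂ) - 1) / (1 - ((t^2 : ℝ) : ℂ)) ^ 2 = ((-(1/(1 - t^2)) : ℝ) : ℂ) := by
      rw [hr]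
      push_cast
      ring
    have e2 : (((ρ^2 : ℝ) : ℂ) - 1) = ((ρ^2 - 1 : ℝ) : ℂ) := by push_cast; ring
    rw [e1, e2] at hds
    have hnorm : ‖((-(1/(1 - t^2)) : ℝ) : ℂ) * (deriv g z * ((ρ^2 - 1 : ℝ) : ℂ))‖
        = (1/(1-t^2)) * (‖deriv g z‖ * (1 - ρ^2)) := by
      rw [norm_mul, norm_mul, Complex.norm_real, Real.norm_eq_abs, Complex.norm_real, Real.norm_eq_abs]
      have hneg1 : (-(1/(1 - t^2)) : ℝ) < 0 := neg_lt_zero.mpr (by positivity)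
      have hneg2 : (ρ^2 - 1 : ℝ) < 0 := by nlinarith
      rw [abs_of_neg hneg1, abs_of_neg hneg2]
      ring
    rw [hnorm] at hds
    have h11 : (1:ℝ)/1 = 1 := by norm_num
    rw [h11, one_div, inv_mul_eq_div, div_le_one ht2] at hds
    exact hds
  · -- constant case
    have hconst := const_case hd hm hstrict
    have hev : g =ᶠ[nhds z] (fun _ => g 0) :=
      Filter.eventuallyEq_of_mem (isOpen_ball.mem_nhds hz) (fun w hw => (hconst w hw).1)
    have hderiv0 : deriv g z = 0 := by
      rw [hev.deriv_eq]; exact deriv_const z _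
    rw [hderiv0, (hconst z hz).2]
    simp

lemma lowbound {u : ℂ} {κ : ℝ} (hκ1 : κ ≤ 1) (hκ2 : -1 < κ) (hu : ‖u‖ < 1) :
    (1 - ‖u‖) * (1 + κ * ‖u‖)
      ≤ ‖(1 - u) * (1 + (κ:ℂ) * u)‖ := by
  set s := ‖u‖ with hsdef
  have hs0 : 0 ≤ s := norm_nonneg u
  rcases le_or_gt 0 κ with hκ0 | hκ0
  · have hexp : (1 - u) * (1 + (κ:ℂ) * u) = 1 + (((κ:ℂ) - 1) * u - (κ:ℂ) * u^2) := by ring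
    rw [hexp]
    set v := ((κ:ℂ) - 1) * u - (κ:ℂ) * u^2 with hvdef
    have hv : ‖v‖ ≤ (1 - κ) * s + κ * s^2 := by
      calc ‖v‖ ≤ ‖((κ:ℂ) - 1) * u‖ + ‖(κ:ℂ) * u^2‖ :=
            norm_sub_le _ _
        _ = (1 - κ) * s + κ * s^2 := by
            rw [norm_mul, norm_mul, norm_pow]
            have h1 : ‖(κ:ℂ) - 1‖ = 1 - κ := by
              rw [show ((κ:ℂ) - 1) = ((κ - 1 : ℝ) : ℂ) from by push_cast; ring,
                Complex.norm_real, Real.norm_eq_abs, abs_of_nonpos (by linarith)]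
              ring
            have h2 : ‖(κ:ℂ)‖ = κ := by
              rw [Complex.norm_real, Real.norm_eq_abs, _root_.abs_of_nonneg hκ0]
            rw [h1, h2]
    have htri : 1 - ‖v‖ ≤ ‖1 + v‖ := by
      have := norm_add_le (1 + v) (-v)
      simp only [add_neg_cancel_right, norm_neg] at this
      simp only [norm_one] at this
      linarith
    have : (1 - s) * (1 + κ * s) = 1 - ((1 - κ) * s + κ * s^2) := by ring
    rw [this]
    linarith
  · rw [norm_mul]
    have hf1 : 1 - s ≤ ‖1 - u‖ := by
      have := norm_add_le (1 - u) u
      simp only [sub_add_cancel, norm_one] at this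
      linarith
    have hf2 : 1 + κ * s ≤ ‖1 + (κ:ℂ) * u‖ := by
      have := norm_add_le (1 + (κ:ℂ) * u) (-((κ:ℂ) * u))
      simp only [add_neg_cancel_right, norm_neg, norm_one, norm_mul] at this
      have h2 : ‖(κ:ℂ)‖ = -κ := by
        rw [Complex.norm_real, Real.norm_eq_abs, abs_of_neg hκ0]
      rw [h2] at this
      nlinarith [this]
    have h1 : (0:ℝ) ≤ 1 - s := by linarith
    have h2 : (0:ℝ) ≤ 1 + κ * s := by nlinarith
    exact mul_le_mul hf1 hf2 h2 (norm_nonneg _)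

lemma final_ineq {α b' r t : ℝ} (hα0 : 0 ≤ α) (hα1 : α < 1) (hb0 : 0 ≤ b') (hb1 : b' ≤ 1)
    (hr0 : 0 ≤ r) (hr1 : r < 1) (ht0 : 0 ≤ t) (ht1 : t ≤ 1)
    (hSP : t * (1 + b' * r) ≤ r + b') :
    2*(1-α)*r*(t + r*(1-t^2)/(1-r^2)) / ((1-r*t)*(1+(1-2*α)*r*t))
      ≤ 2*(1-α)*r/(1-r^2) * ((b'*r^2+2*r+b')/((1-2*α)*r^2+2*(1-α)*b'*r+1)) := by
  have h1 : (0:ℝ) < 1 - r^2 := by nlinarith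
  have hrt1 : r * t ≤ r := by nlinarith
  have h3 : (0:ℝ) < 1 - r*t := by nlinarith
  have h4 : (0:ℝ) < 1 + (1-2*α)*r*t := by nlinarith [mul_nonneg hr0 ht0, mul_nonneg (mul_nonneg hα0 hr0) ht0]
  have h5 : (0:ℝ) < (1-2*α)*r^2 + 2*(1-α)*b'*r + 1 := by
    nlinarith [mul_nonneg (mul_nonneg (by linarith : (0:ℝ) ≤ 2*(1-α)) hb0) hr0, sq_nonneg r,
      mul_nonneg (mul_nonneg hα0 hr0) hr0]
  have heq : 2*(1-α)*r*(t + r*(1-t^2)/(1-r^2)) / ((1-r*t)*(1+(1-2*α)*r*t))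
      = 2*(1-α)*r/(1-r^2) * ((r+t)/(1+(1-2*α)*r*t)) := by
    field_simp
    ring
  rw [heq]
  have hc0 : (0:ℝ) ≤ 2*(1-α)*r/(1-r^2) := by
    apply div_nonneg _ h1.le
    nlinarith
  apply mul_le_mul_of_nonneg_left _ hc0
  rw [div_le_div_iff₀ h4 h5]
  have hE : 0 ≤ r + b' - t*(1 + b'*r) := by linarith
  have hk : 0 ≤ 1 - (1-2*α)*r^2 := by nlinarith [mul_nonneg (mul_nonneg hα0 hr0) hr0]
  nlinarith [mul_nonneg hE hk]

lemma div_ident (z H H' K A : ℂ) (hH : H ≠ 0) (hK : K ≠ 0) (hA : A ≠ 0) :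
    z * H' / H = A * (z * (H' * A / K^2)) / ((A/K) * (A*H/K)) := by
  field_simp

theorem mccarty_bound (α b : ℝ) (hα0 : 0 ≤ α) (hα1 : α < 1) (hb : |b| ≤ 1)
    (h : ℂ → ℂ) (hdiff : DifferentiableOn ℂ h (Metric.ball (0 : ℂ) 1))
    (h0 : h 0 = 1) (h1 : deriv h 0 = 2 * b * (1 - α))
    (hre : ∀ z ∈ Metric.ball (0 : ℂ) 1, α < (h z).re) :
    ∀ (z : ℂ) (r : ℝ), ‖z‖ = r → r < 1 → h z ≠ 0 →
      ‖z * deriv h z / h z‖ ≤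
        2 * (1 - α) * r / (1 - r ^ 2) *
          ((|b| * r ^ 2 + 2 * r + |b|) / ((1 - 2 * α) * r ^ 2 + 2 * (1 - α) * |b| * r + 1)) := by
  intro z r hzr hr1 hhz
  have h0mem : (0:ℂ) ∈ ball (0:ℂ) 1 := by simp
  have hr0 : 0 ≤ r := hzr ▸ norm_nonneg z
  have hball : z ∈ ball (0:ℂ) 1 := by
    rw [mem_ball_zero_iff, hzr]; exact hr1
  have hane : ((1:ℂ) - (α:ℂ)) ≠ 0 := by
    intro hc
    have h2 : ((1 - α : ℝ) : ℂ) = 0 := by push_cast; linear_combination hc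
    rw [Complex.ofReal_eq_zero] at h2
    linarith
  -- the denominator h w + (1 - 2α) is nonvanishing
  have hKne : ∀ w ∈ ball (0:ℂ) 1, h w + (1 - 2*(α:ℂ)) ≠ 0 := by
    intro w hw hcon
    have hre' := hre w hw
    have hres : (h w + (1 - 2*(α:ℂ))).re = (h w).re + (1 - 2*α) := by
      simp [Complex.add_re, Complex.sub_re, Complex.ofReal_re]
    rw [hcon] at hres
    simp only [Complex.zero_re] at hres
    linarith
  set ω : ℂ → ℂ := fun w => (h w - 1)/(h w + (1 - 2*(α:ℂ))) with hωdef
  have hωdiff : DifferentiableOn ℂ ω (ball 0 1) :=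
    (hdiff.sub (differentiableOn_const 1)).div (hdiff.add (differentiableOn_const _)) hKne
  have hωlt : ∀ w ∈ ball (0:ℂ) 1, ‖ω w‖ < 1 := by
    intro w hw
    have hx := hre w hw
    have hd := hKne w hw
    rw [hωdef]
    simp only
    rw [norm_div, div_lt_one (norm_pos_iff.mpr hd)]
    rw [Complex.norm_def, Complex.norm_def]
    apply Real.sqrt_lt_sqrt (Complex.normSq_nonneg _)
    simp only [Complex.normSq_apply, Complex.add_re, Complex.sub_re, Complex.add_im,
      Complex.sub_im, Complex.one_re, Complex.one_im, Complex.mul_re, Complex.mul_im,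
      Complex.ofReal_re, Complex.ofReal_im, Complex.re_ofNat, Complex.im_ofNat]
    nlinarith [hx, hα1]
  have hω0 : ω 0 = 0 := by rw [hωdef]; simp [h0]
  have hωderiv : ∀ w ∈ ball (0:ℂ) 1,
      HasDerivAt ω (deriv h w * (2*(1 - (α:ℂ))) / (h w + (1 - 2*(α:ℂ)))^2) w := by
    intro w hw
    have hhw : HasDerivAt h (deriv h w) w :=
      (hdiff.differentiableAt (isOpen_ball.mem_nhds hw)).hasDerivAt
    have h1' : HasDerivAt (fun u => h u - 1) (deriv h w) w := hhw.sub_const 1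
    have h2' : HasDerivAt (fun u => h u + (1 - 2*(α:ℂ))) (deriv h w) w := hhw.add_const _
    have hdd := h1'.div h2' (hKne w hw)
    refine hdd.congr_deriv ?_
    have hKw := hKne w hw
    ring
  have hωd0 : deriv ω 0 = (b:ℂ) := by
    rw [(hωderiv 0 h0mem).deriv, h0, h1]
    have : (1:ℂ) + (1 - 2*(α:ℂ)) = 2*(1-(α:ℂ)) := by ring
    rw [this]
    field_simp
  set φ : ℂ → ℂ := dslope ω 0 with hφdef
  have hφdiff : DifferentiableOn ℂ φ (ball 0 1) := by
    intro w hw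
    rcases eq_or_ne w 0 with rfl | hne
    · have hano : AnalyticAt ℂ ω 0 := hωdiff.analyticAt (isOpen_ball.mem_nhds h0mem)
      obtain ⟨p, hp⟩ := hano
      exact hp.has_fpower_series_dslope_fslope.analyticAt.differentiableAt.differentiableWithinAt
    · exact ((differentiableAt_dslope_of_ne hne).2
        (hωdiff.differentiableAt (isOpen_ball.mem_nhds hw))).differentiableWithinAt
  have hφbd : ∀ w ∈ ball (0:ℂ) 1, ‖φ w‖ ≤ 1 := by
    intro w hw
    have hmaps : MapsTo ω (ball 0 1) (ball (ω 0) 1) := by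
      intro u hu
      rw [hω0, mem_ball_zero_iff]
      exact hωlt u hu
    have := Complex.norm_dslope_le_div_of_mapsTo_ball hωdiff (hmaps.mono_right ball_subset_closedBall) hw
    simpa using this
  have hφ0 : φ 0 = (b:ℂ) := by rw [hφdef, dslope_same]; exact hωd0
  have hφ0abs : ‖φ 0‖ = |b| := by rw [hφ0, Complex.norm_real, Real.norm_eq_abs]
  rcases eq_or_ne z 0 with rfl | hzne
  · have hr00 : r = 0 := by rw [← hzr]; simp
    subst hr00
    simp
  -- main case
  have hrpos : 0 < r := hzr ▸ norm_pos_iff.mpr hzne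
  set t := ‖φ z‖ with htdef
  have ht0 : 0 ≤ t := norm_nonneg _
  have ht1 : t ≤ 1 := hφbd z hball
  have h1r2 : (0:ℝ) < 1 - r^2 := by nlinarith
  -- Schwarz–Pick bounds
  have hSP1 : t * (1 + |b| * r) ≤ r + |b| := by
    have := pick_val hφdiff hφbd hball
    rwa [hφ0abs, hzr] at this
  have hSP2 : ‖deriv φ z‖ * (1 - r^2) ≤ 1 - t^2 := by
    have := pick_deriv hφdiff hφbd hball
    rwa [hzr] at this
  have hSP2' : ‖deriv φ z‖ ≤ (1 - t^2)/(1 - r^2) := by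
    rw [le_div_iff₀ h1r2]; exact hSP2
  -- ω z = z * φ z
  have hωfun : ∀ w, ω w = w * φ w := by
    intro w
    rcases eq_or_ne w 0 with rfl | hne
    · rw [hω0]; ring
    · rw [hφdef, dslope_of_ne _ hne, slope_def_field, hω0]
      field_simp
      ring
  have hsz : ‖ω z‖ = r * t := by
    rw [hωfun z, norm_mul, hzr, htdef]
  -- deriv ω z = φ z + z * deriv φ z
  have hφzd : DifferentiableAt ℂ φ z := hφdiff.differentiableAt (isOpen_ball.mem_nhds hball)
  have hderivω : deriv ω z = φ z + z * deriv φ z := by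
    have hfn : ω = fun w => w * φ w := funext hωfun
    have h' : HasDerivAt (fun w => w * φ w) (1 * φ z + z * deriv φ z) z :=
      (hasDerivAt_id z).mul hφzd.hasDerivAt
    rw [hfn, h'.deriv]; ring
  have hA : ‖deriv ω z‖ ≤ t + r * (1 - t^2)/(1 - r^2) := by
    rw [hderivω]
    calc ‖φ z + z * deriv φ z‖
        ≤ ‖φ z‖ + ‖z * deriv φ z‖ := norm_add_le _ _
      _ = t + r * ‖deriv φ z‖ := by rw [norm_mul, hzr, htdef]
      _ ≤ t + r * ((1 - t^2)/(1 - r^2)) := by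
          have := mul_le_mul_of_nonneg_left hSP2' hr0
          linarith
      _ = t + r * (1 - t^2)/(1 - r^2) := by ring
  -- the key identity
  have hKz := hKne z hball
  have hωz_ne1 : (1:ℂ) - ω z = 2*(1-(α:ℂ))/(h z + (1 - 2*(α:ℂ))) := by
    rw [hωdef]; simp only
    field_simp [hKz]
    ring
  have hωz_ne2 : (1:ℂ) + (1 - 2*(α:ℂ)) * ω z
      = 2*(1-(α:ℂ)) * h z/(h z + (1 - 2*(α:ℂ))) := by
    rw [hωdef]; simp only
    field_simp [hKz]
    ring
  have hident : z * deriv h z / h z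
      = 2*(1-(α:ℂ)) * (z * deriv ω z) / ((1 - ω z) * (1 + (1 - 2*(α:ℂ)) * ω z)) := by
    rw [(hωderiv z hball).deriv, hωz_ne1, hωz_ne2]
    exact div_ident z (h z) (deriv h z) (h z + (1 - 2*(α:ℂ))) (2*(1-(α:ℂ))) hhz hKz
      (mul_ne_zero two_ne_zero hane)
  rw [hident]
  -- compute absolute value of the RHS
  have habs_eq : ‖2*(1-(α:ℂ)) * (z * deriv ω z) / ((1 - ω z) * (1 + (1 - 2*(α:ℂ)) * ω z))‖
      = 2*(1-α) * (r * ‖deriv ω z‖) /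
        ‖(1 - ω z) * (1 + (1 - 2*(α:ℂ)) * ω z)‖ := by
    rw [show (2*(1-(α:ℂ))) = ((2*(1-α) : ℝ) : ℂ) from by push_cast; ring]
    rw [norm_div, norm_mul, norm_mul, hzr, Complex.norm_real, Real.norm_eq_abs, _root_.abs_of_nonneg (by linarith : (0:ℝ) ≤ 2*(1-α))]
  rw [habs_eq]
  -- lower bound on denominator
  have hBlow : (1 - r*t) * (1 + (1-2*α)*r*t)
      ≤ ‖(1 - ω z) * (1 + (1 - 2*(α:ℂ)) * ω z)‖ := by
    have h' := lowbound (u := ω z) (κ := 1-2*α) (by linarith) (by linarith) (hωlt z hball)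
    rw [hsz] at h'
    rw [show (((1-2*α : ℝ)) : ℂ) = 1 - 2*(α:ℂ) from by push_cast; ring] at h'
    calc (1 - r*t) * (1 + (1-2*α)*r*t) = (1 - r*t) * (1 + (1-2*α)*(r*t)) := by ring
      _ ≤ _ := h'
  have hd_pos : (0:ℝ) < (1 - r*t) * (1 + (1-2*α)*r*t) := by
    have hrt : r*t ≤ r := by nlinarith
    have h3 : (0:ℝ) < 1 - r*t := by nlinarith
    have h4 : (0:ℝ) < 1 + (1-2*α)*r*t := by
      nlinarith [mul_nonneg hr0 ht0, mul_nonneg (mul_nonneg hα0 hr0) ht0]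
    exact mul_pos h3 h4
  have hc_nonneg : (0:ℝ) ≤ 2*(1-α)*r*(t + r*(1-t^2)/(1-r^2)) := by
    have h5 : (0:ℝ) ≤ r*(1-t^2)/(1-r^2) := by
      apply div_nonneg _ h1r2.le
      apply mul_nonneg hr0
      nlinarith
    apply mul_nonneg (by nlinarith) (by linarith)
  have hac : 2*(1-α) * (r * ‖deriv ω z‖) ≤ 2*(1-α)*r*(t + r*(1-t^2)/(1-r^2)) := by
    have h2 := mul_le_mul_of_nonneg_left hA (show (0:ℝ) ≤ 2*(1-α)*r by nlinarith)
    calc 2*(1-α) * (r * ‖deriv ω z‖) = 2*(1-α)*r * ‖deriv ω z‖ := by ring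
      _ ≤ 2*(1-α)*r * (t + r*(1-t^2)/(1-r^2)) := h2
      _ = 2*(1-α)*r*(t + r*(1-t^2)/(1-r^2)) := by ring
  calc 2*(1-α) * (r * ‖deriv ω z‖) /
        ‖(1 - ω z) * (1 + (1 - 2*(α:ℂ)) * ω z)‖
      ≤ 2*(1-α)*r*(t + r*(1-t^2)/(1-r^2)) / ((1 - r*t)*(1 + (1-2*α)*r*t)) :=
        div_le_div₀ hc_nonneg hac hd_pos hBlow
    _ ≤ 2*(1-α)*r/(1 - r^2) * ((|b| * r^2 + 2*r + |b|)/((1-2*α)*r^2 + 2*(1-α) * |b| * r + 1)) :=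
        final_ineq hα0 hα1 (abs_nonneg b) hb hr0 hr1 ht0 ht1 hSP1
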